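/- Let X_1, ..., X_n be a martingale difference sequence with respect to a filtration F_1, ..., F_n, with each X_j bounded above. Let S_n = ∑_{j=1}^{n} X_j, ν_n = ∑_{j=1}^{n} E[X_j² | F_{j-1}], and κ_n = max_{1 ≤ j ≤ n} X_j. Then for any δ > 0, ν > 0, κ > 0: P((S_n ≥ √(2 ν ln(1/δ)) + κ ln(1/δ)/3) ∧ (ν_n ≤ ν) ∧ (κ_n ≤ κ)) ≤ δ. -/

import Mathlib

open MeasureTheory

private lemma bern_exp_le_neg (x : ℝ) (hx : x ≤ 0) : Real.exp x ≤ 1 + x + x^2/2 := by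
  set f : ℝ → ℝ := fun x => 1 + x + x^2/2 - Real.exp x with hf
  have hderiv : ∀ x : ℝ, HasDerivAt f (1 + x - Real.exp x) x := by
    intro x
    have h1 : HasDerivAt (fun x : ℝ => 1 + x + x^2/2) (1 + x) x := by
      have h := ((hasDerivAt_id' x).const_add 1).add (((hasDerivAt_pow 2 x)).div_const 2)
      exact h.congr_deriv (by norm_num)
    exact h1.sub (Real.hasDerivAt_exp x)
  have hanti : Antitone f := by
    refine antitone_of_deriv_nonpos (fun y => (hderiv y).differentiableAt) (fun y => ?_)
    rw [(hderiv y).deriv]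
    have := Real.add_one_le_exp y
    linarith
  have := hanti hx
  simp only [hf, Real.exp_zero] at this
  norm_num at this
  linarith

private lemma bern_fact_ge (n : ℕ) : (2:ℝ) * 3^n ≤ (n+2).factorial := by
  induction n with
  | zero => norm_num [Nat.factorial]
  | succ k ih =>
    have h : ((k+1+2).factorial : ℝ) = (k+3) * (k+2).factorial := by
      have : k+1+2 = k+3 := by ring
      rw [this, Nat.factorial_succ]; push_cast; ring
    rw [h]
    calc (2:ℝ) * 3^(k+1) = 3 * (2*3^k) := by ring
    _ ≤ 3 * (k+2).factorial := by nlinarith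
    _ ≤ (k+3) * (k+2).factorial := by
        have : (0:ℝ) ≤ ((k+2).factorial:ℝ) := by positivity
        nlinarith

private lemma bern_exp_le_pos (x : ℝ) (h0 : 0 ≤ x) (h3 : x < 3) :
    Real.exp x ≤ 1 + x + x^2/(2*(1-x/3)) := by
  have hsum : Summable (fun n => x^n / n.factorial) := Real.summable_pow_div_factorial x
  have hx3 : x/3 < 1 := by linarith
  have hx3' : (0:ℝ) ≤ x/3 := by linarith
  have hgeo : Summable (fun n : ℕ => x^2/2 * (x/3)^n) :=
    (summable_geometric_of_lt_one hx3' hx3).mul_left _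
  have hexp : Real.exp x = ∑ i ∈ Finset.range 2, x^i / i.factorial
      + ∑' n : ℕ, x^(n+2) / (n+2).factorial := by
    rw [Real.exp_eq_exp_ℝ, NormedSpace.exp_eq_tsum_div]
    exact (Summable.sum_add_tsum_nat_add 2 hsum).symm
  rw [hexp]
  have h1 : ∑ i ∈ Finset.range 2, x^i / i.factorial = 1 + x := by
    simp [Finset.sum_range_succ, Nat.factorial]
  have h2 : ∑' n : ℕ, x^(n+2) / (n+2).factorial ≤ ∑' n : ℕ, x^2/2 * (x/3)^n := by
    refine Summable.tsum_le_tsum (fun n => ?_) ((summable_nat_add_iff 2).2 hsum) hgeo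
    have h3n : (0:ℝ) < 2 * 3^n := by positivity
    have step1 : x^(n+2) / (n+2).factorial ≤ x^(n+2) / (2*3^n) :=
      div_le_div_of_nonneg_left (by positivity) h3n (bern_fact_ge n)
    have step2 : x^(n+2) / (2*3^n) = x^2/2 * (x/3)^n := by
      rw [div_pow]; field_simp; ring
    linarith [step1, step2 ▸ step1]
  have h4 : ∑' n : ℕ, x^2/2 * (x/3)^n = x^2/2 * (1-x/3)⁻¹ := by
    rw [tsum_mul_left, tsum_geometric_of_lt_one hx3' hx3]
  rw [h1]
  have h5 : x^2/2 * (1-x/3)⁻¹ = x^2/(2*(1-x/3)) := by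
    field_simp
  linarith [h2, h4 ▸ h2]

set_option maxHeartbeats 1000000 in
theorem bernstein_martingale {Ω : Type*} {m0 : MeasurableSpace Ω}
    (μ : Measure Ω) [IsProbabilityMeasure μ] (ℱ : Filtration ℕ m0)
    (n : ℕ) (hn : 1 ≤ n) (X : ℕ → Ω → ℝ)
    (hadapt : ∀ j, Measurable[ℱ j] (X j))
    (hint : ∀ j, Integrable (X j) μ)
    (hint2 : ∀ j, Integrable (fun ω => (X j ω) ^ 2) μ)
    (hmds : ∀ j ∈ Finset.Icc 1 n, μ[X j | ℱ (j - 1)] =ᵐ[μ] 0)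
    (hbdd : ∃ C : ℝ, ∀ j ω, X j ω ≤ C)
    (δ ν κ : ℝ) (hδ : 0 < δ) (hν : 0 < ν) (hκ : 0 < κ) :
    μ {ω | (Real.sqrt (2 * ν * Real.log (1 / δ)) + κ * Real.log (1 / δ) / 3 ≤
            ∑ j ∈ Finset.Icc 1 n, X j ω) ∧
        (∑ j ∈ Finset.Icc 1 n, (μ[fun ω' => (X j ω') ^ 2 | ℱ (j - 1)]) ω ≤ ν) ∧
        ((Finset.Icc 1 n).sup' (Finset.nonempty_Icc.mpr hn) (fun j => X j ω) ≤ κ)} ≤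
      ENNReal.ofReal δ := by
  -- trivial case δ ≥ 1
  rcases le_or_gt 1 δ with hδ1 | hδ1
  · calc μ _ ≤ 1 := prob_le_one
    _ = ENNReal.ofReal 1 := ENNReal.ofReal_one.symm
    _ ≤ ENNReal.ofReal δ := ENNReal.ofReal_le_ofReal hδ1
  set L := Real.log (1/δ) with hLdef
  have hL0 : 0 < L := Real.log_pos (by rw [lt_div_iff₀ hδ]; linarith)
  set a := Real.sqrt (2*L/ν) with hadef
  have ha0 : 0 < a := Real.sqrt_pos.2 (by positivity)
  have ha2 : a^2 = 2*L/ν := Real.sq_sqrt (by positivity)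
  set l := a / (1 + κ*a/3) with hldef
  have hden : (0:ℝ) < 1 + κ*a/3 := by positivity
  have hl0 : 0 < l := div_pos ha0 hden
  have hlκ : l*κ < 3 := by
    rw [hldef, div_mul_eq_mul_div, div_lt_iff₀ hden]; nlinarith
  have h1l : 1 - l*κ/3 = 1/(1+κ*a/3) := by
    rw [hldef]; field_simp; ring
  have h1l0 : (0:ℝ) < 1 - l*κ/3 := by rw [h1l]; positivity
  set c := l^2/(2*(1-l*κ/3)) with hcdef
  have hc0 : 0 < c := by positivity
  set t := Real.sqrt (2*ν*L) + κ*L/3 with htdef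
  have hsqrt : a * ν = Real.sqrt (2*ν*L) := by
    rw [hadef, ← Real.sqrt_sq hν.le, ← Real.sqrt_mul (by positivity)]
    congr 1
    rw [Real.sqrt_sq hν.le]; field_simp
  have hcval : c = a^2/(2*(1+κ*a/3)) := by
    rw [hcdef, h1l, hldef]; field_simp
  have hLa : L = a^2*ν/2 := by rw [ha2]; field_simp
  have key : l*t - c*ν = L := by
    rw [htdef, ← hsqrt, hldef, hcval]
    rw [hLa]
    field_simp
    ring
  -- the truncated variables
  set Y : ℕ → Ω → ℝ := fun j ω => min (X j ω) κ with hYdef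
  set g : ℕ → Ω → ℝ := fun j => μ[fun ω' => (X j ω')^2 | ℱ (j-1)] with hgdef
  have hYle : ∀ j ω, Y j ω ≤ κ := fun j ω => min_le_right _ _
  have hYX : ∀ j ω, Y j ω ≤ X j ω := fun j ω => min_le_left _ _
  have hY2 : ∀ j ω, (Y j ω)^2 ≤ (X j ω)^2 := by
    intro j ω
    rcases le_total (X j ω) κ with h | h
    · simp [hYdef, min_eq_left h]
    · have : Y j ω = κ := min_eq_right h
      rw [this]
      nlinarith
  have hYmeas : ∀ j, Measurable[ℱ j] (Y j) := fun j => (hadapt j).min measurable_const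
  have hYint : ∀ j, Integrable (Y j) μ := by
    intro j
    have : Y j = (X j) ⊓ (fun _ => κ) := rfl
    rw [this]
    exact (hint j).inf (integrable_const κ)
  have hgmeas : ∀ j, StronglyMeasurable[ℱ (j-1)] (g j) := fun j => stronglyMeasurable_condExp
  have hgint : ∀ j, Integrable (g j) μ := fun j => integrable_condExp
  have hg0 : ∀ j, 0 ≤ᵐ[μ] g j := fun j =>
    condExp_nonneg (Filter.Eventually.of_forall fun ω => sq_nonneg _)
  have hg0all : ∀ᵐ ω ∂μ, ∀ j, 0 ≤ g j ω := ae_all_iff.2 hg0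
  -- pointwise exponential bound
  have hexpY : ∀ j ω, Real.exp (l * Y j ω) ≤ 1 + l * Y j ω + c * (X j ω)^2 := by
    intro j ω
    have hYκ := hYle j ω
    have hxv : l * Y j ω ≤ l * κ := mul_le_mul_of_nonneg_left hYκ hl0.le
    have hb : Real.exp (l * Y j ω) ≤ 1 + l * Y j ω + c * (Y j ω)^2 := by
      set x := l * Y j ω with hxdef
      have hx2 : x^2 = l^2 * (Y j ω)^2 := by rw [hxdef]; ring
      rcases le_or_gt x 0 with hx0 | hx0
      · have h1 := bern_exp_le_neg x hx0
        have h2 : x^2/2 ≤ c * (Y j ω)^2 := by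
          have hcge : l^2/2 ≤ c := by
            rw [hcdef]
            exact div_le_div_of_nonneg_left (sq_nonneg l) (by positivity)
              (by nlinarith [mul_pos hl0 hκ])
          calc x^2/2 = (l^2/2) * (Y j ω)^2 := by rw [hx2]; ring
          _ ≤ c * (Y j ω)^2 := mul_le_mul_of_nonneg_right hcge (sq_nonneg _)
        linarith
      · have hxlt3 : x < 3 := lt_of_le_of_lt hxv hlκ
        have h1 := bern_exp_le_pos x hx0.le hxlt3
        have h2 : x^2/(2*(1-x/3)) ≤ c * (Y j ω)^2 := by
          have hx30 : (0:ℝ) < 1 - x/3 := by linarith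
          have hle : 1 - l*κ/3 ≤ 1 - x/3 := by linarith
          have := div_le_div_of_nonneg_left (by positivity : (0:ℝ) ≤ x^2)
            (by positivity : (0:ℝ) < 2*(1-l*κ/3)) (by nlinarith : 2*(1-l*κ/3) ≤ 2*(1-x/3))
          calc x^2/(2*(1-x/3)) ≤ x^2/(2*(1-l*κ/3)) := this
          _ = c * (Y j ω)^2 := by rw [hcdef, hx2]; field_simp
        linarith
    have h3 : c * (Y j ω)^2 ≤ c * (X j ω)^2 := mul_le_mul_of_nonneg_left (hY2 j ω) hc0.le
    linarith
  -- the exponential supermartingale-type process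
  set Z : ℕ → Ω → ℝ := fun k ω => Real.exp (∑ j ∈ Finset.Icc 1 k, (l * Y j ω - c * g j ω))
    with hZdef
  have hZpos : ∀ k ω, 0 < Z k ω := fun k ω => Real.exp_pos _
  have hZmeas : ∀ k, Measurable (Z k) := by
    intro k
    apply Real.measurable_exp.comp
    apply Finset.measurable_sum
    intro j _
    apply Measurable.sub
    · exact (measurable_const.mul ((hYmeas j).mono (ℱ.le j) le_rfl))
    · exact (measurable_const.mul (((hgmeas j).measurable.mono (ℱ.le (j-1)) le_rfl)))
  have hZbdd : ∀ k, ∀ᵐ ω ∂μ, Z k ω ≤ Real.exp (l*κ*k) := by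
    intro k
    filter_upwards [hg0all] with ω hg
    rw [hZdef]
    simp only
    rw [Real.exp_le_exp]
    calc ∑ j ∈ Finset.Icc 1 k, (l * Y j ω - c * g j ω)
        ≤ ∑ j ∈ Finset.Icc 1 k, l*κ := by
          apply Finset.sum_le_sum
          intro j _
          have h1 : l * Y j ω ≤ l * κ := mul_le_mul_of_nonneg_left (hYle j ω) hl0.le
          have h2 : 0 ≤ c * g j ω := mul_nonneg hc0.le (hg j)
          linarith
    _ = l*κ*k := by
          rw [Finset.sum_const, Nat.card_Icc, nsmul_eq_mul]
          norm_num
          ring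
  have hZint : ∀ k, Integrable (Z k) μ := by
    intro k
    apply Integrable.mono' (integrable_const (Real.exp (l*κ*k))) (hZmeas k).aestronglyMeasurable
    filter_upwards [hZbdd k] with ω h
    rw [Real.norm_eq_abs, abs_of_pos (hZpos k ω)]
    exact h
  -- main supermartingale estimate
  have hZle1 : ∀ k, k ≤ n → ∫ ω, Z k ω ∂μ ≤ 1 := by
    intro k
    induction k with
    | zero =>
      intro _
      have hz : Z 0 = fun _ => (1:ℝ) := by
        funext ω; rw [hZdef]; simp
      rw [hz]
      simp
    | succ k ih =>
      intro hk1
      have ihk := ih (le_trans (Nat.le_succ k) hk1)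
      have hm : ℱ k ≤ m0 := ℱ.le k
      haveI : SigmaFinite (μ.trim hm) := by infer_instance
      set f : Ω → ℝ := fun ω => Z k ω * Real.exp (-(c * g (k+1) ω)) with hfdef
      set h : Ω → ℝ := fun ω => Real.exp (l * Y (k+1) ω) with hhdef
      have hsplit : ∀ ω, Z (k+1) ω = f ω * h ω := by
        intro ω
        have hzk : Z k ω = Real.exp (∑ j ∈ Finset.Icc 1 k, (l * Y j ω - c * g j ω)) := rfl
        have hz1 : Z (k+1) ω
            = Real.exp (∑ j ∈ Finset.Icc 1 (k+1), (l * Y j ω - c * g j ω)) := rfl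
        rw [hz1, hfdef, hhdef]
        simp only
        rw [hzk, Finset.sum_Icc_succ_top (by omega : 1 ≤ k + 1)]
        rw [← Real.exp_add, ← Real.exp_add]
        congr 1
        ring
      have hk0 : (k+1) - 1 = k := rfl
      -- measurability of f wrt ℱ k
      have hZkmeas : Measurable[ℱ k] (Z k) := by
        apply Measurable.comp (f := fun ω => ∑ j ∈ Finset.Icc 1 k, (l * Y j ω - c * g j ω))
          Real.measurable_exp
        apply Finset.measurable_sum
        intro j hj
        rw [Finset.mem_Icc] at hj
        apply Measurable.sub
        · exact measurable_const.mul ((hYmeas j).mono (ℱ.mono hj.2) le_rfl)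
        · exact measurable_const.mul
            ((hgmeas j).measurable.mono (ℱ.mono (le_trans (Nat.sub_le j 1) hj.2)) le_rfl)
      have hgk1meas : Measurable[ℱ k] (g (k+1)) := by
        have := (hgmeas (k+1)).measurable
        rwa [hk0] at this
      have hfmeas : StronglyMeasurable[ℱ k] f :=
        (hZkmeas.mul (Real.measurable_exp.comp (hgk1meas.const_mul c).neg)).stronglyMeasurable
      -- integrability
      have hhint : Integrable h μ := by
        apply Integrable.mono' (integrable_const (Real.exp (l*κ)))
          ((Real.measurable_exp.comp
            (((hYmeas (k+1)).mono (ℱ.le (k+1)) le_rfl).const_mul l)).aestronglyMeasurable)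
        apply Filter.Eventually.of_forall
        intro ω
        show ‖Real.exp (l * Y (k+1) ω)‖ ≤ Real.exp (l*κ)
        rw [Real.norm_eq_abs, abs_of_pos (Real.exp_pos _), Real.exp_le_exp]
        exact mul_le_mul_of_nonneg_left (hYle (k+1) ω) hl0.le
      have hfhint : Integrable (f * h) μ := by
        have : f * h = Z (k+1) := by ext ω; rw [hsplit ω]; rfl
        rw [this]
        exact hZint (k+1)
      -- pull-out
      have hpull : μ[f * h | ℱ k] =ᵐ[μ] f * μ[h | ℱ k] :=
        condExp_mul_of_stronglyMeasurable_left hfmeas hfhint hhint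
      -- conditional bound on h
      have hRHSint : Integrable (fun ω => 1 + (l * Y (k+1) ω + c * (X (k+1) ω)^2)) μ :=
        (integrable_const 1).add (((hYint (k+1)).const_mul l).add ((hint2 (k+1)).const_mul c))
      have hY0 : μ[Y (k+1) | ℱ k] ≤ᵐ[μ] 0 := by
        have h1 : μ[Y (k+1) | ℱ k] ≤ᵐ[μ] μ[X (k+1) | ℱ k] :=
          condExp_mono (hYint (k+1)) (hint (k+1))
            (Filter.Eventually.of_forall (hYX (k+1)))
        have h2 := hmds (k+1) (Finset.mem_Icc.2 ⟨by omega, hk1⟩)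
        exact h1.trans h2.le
      have hcond : μ[h | ℱ k] ≤ᵐ[μ] fun ω => 1 + c * g (k+1) ω := by
        have hfeq : (fun ω => 1 + (l * Y (k+1) ω + c * (X (k+1) ω)^2))
            = (fun _ : Ω => (1:ℝ)) + (l • Y (k+1) + c • (fun ω => (X (k+1) ω)^2)) := by
          funext ω
          simp [smul_eq_mul]
        have step1 : μ[h | ℱ k] ≤ᵐ[μ]
            μ[fun ω => 1 + (l * Y (k+1) ω + c * (X (k+1) ω)^2) | ℱ k] := by
          apply condExp_mono hhint hRHSint
          apply Filter.Eventually.of_forall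
          intro ω
          have := hexpY (k+1) ω
          simp only [hhdef]
          linarith
        have i1 : Integrable (l • Y (k+1)) μ := (hYint (k+1)).smul l
        have i2 : Integrable (c • fun ω => (X (k+1) ω)^2) μ := (hint2 (k+1)).smul c
        have step2 : μ[fun ω => 1 + (l * Y (k+1) ω + c * (X (k+1) ω)^2) | ℱ k] =ᵐ[μ]
            fun ω => 1 + (l * (μ[Y (k+1) | ℱ k]) ω
              + c * (μ[fun ω' => (X (k+1) ω')^2 | ℱ k]) ω) := by
          rw [hfeq]
          have e1 := condExp_add (μ := μ) (m := ℱ k) (integrable_const (1:ℝ)) (i1.add i2)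
          have e2 := condExp_add (μ := μ) (m := ℱ k) i1 i2
          have e3 := condExp_smul (μ := μ) (m := ℱ k) l (Y (k+1))
          have e4 := condExp_smul (μ := μ) (m := ℱ k) c (fun ω => (X (k+1) ω)^2)
          filter_upwards [e1, e2, e3, e4] with ω h1 h2 h3 h4
          rw [h1, Pi.add_apply, h2, Pi.add_apply, h3, h4, condExp_const hm (1:ℝ)]
          simp [smul_eq_mul]
        have hgeq : ∀ ω, g (k+1) ω = (μ[fun ω' => (X (k+1) ω')^2 | ℱ k]) ω := fun ω => rfl
        filter_upwards [step1, step2, hY0] with ω s1 s2 s3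
        rw [s2] at s1
        have hYω : (μ[Y (k+1) | ℱ k]) ω ≤ 0 := s3
        have hlY : l * (μ[Y (k+1) | ℱ k]) ω ≤ 0 :=
          mul_nonpos_of_nonneg_of_nonpos hl0.le hYω
        rw [hgeq ω]
        linarith
      -- the integral chain
      have hfm0 : Measurable f := by
        apply Measurable.mul (hZmeas k)
        exact Real.measurable_exp.comp
          ((((hgmeas (k+1)).measurable.mono (ℱ.le k) le_rfl).const_mul c).neg)
      have hf_nonneg : ∀ ω, 0 ≤ f ω :=
        fun ω => mul_nonneg (hZpos k ω).le (Real.exp_pos _).le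
      have hfbdd : ∀ᵐ ω ∂μ, f ω ≤ Real.exp (l*κ*k) := by
        filter_upwards [hZbdd k, hg0all] with ω h1 h2
        have hexple : Real.exp (-(c * g (k+1) ω)) ≤ 1 := by
          rw [Real.exp_le_one_iff]
          have := mul_nonneg hc0.le (h2 (k+1))
          linarith
        calc f ω = Z k ω * Real.exp (-(c * g (k+1) ω)) := rfl
        _ ≤ Z k ω * 1 := mul_le_mul_of_nonneg_left hexple (hZpos k ω).le
        _ = Z k ω := mul_one _
        _ ≤ Real.exp (l*κ*k) := h1
      have hfh : ∫ ω, Z (k+1) ω ∂μ = ∫ ω, (f * h) ω ∂μ := by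
        apply integral_congr_ae
        apply Filter.Eventually.of_forall
        intro ω
        rw [hsplit ω]
        rfl
      have e0 : ∫ ω, (f*h) ω ∂μ = ∫ ω, (μ[f*h | ℱ k]) ω ∂μ :=
        (integral_condExp hm).symm
      have e1 : ∫ ω, (μ[f*h | ℱ k]) ω ∂μ = ∫ ω, (f * μ[h | ℱ k]) ω ∂μ :=
        integral_congr_ae hpull
      have int1 : Integrable (f * μ[h | ℱ k]) μ := integrable_condExp.congr hpull
      have int2 : Integrable (fun ω => f ω * (1 + c * g (k+1) ω)) μ := by
        apply Integrable.mono'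
          (((integrable_const (1:ℝ)).add ((hgint (k+1)).const_mul c)).const_mul
            (Real.exp (l*κ*k)))
        · exact (hfm0.mul (measurable_const.add
            (((hgmeas (k+1)).measurable.mono (ℱ.le k) le_rfl).const_mul c))).aestronglyMeasurable
        · filter_upwards [hfbdd, hg0all] with ω h1 h2
          have hg1 : (0:ℝ) ≤ 1 + c * g (k+1) ω := by
            have := mul_nonneg hc0.le (h2 (k+1))
            linarith
          rw [Real.norm_eq_abs, abs_of_nonneg (mul_nonneg (hf_nonneg ω) hg1)]
          exact mul_le_mul_of_nonneg_right h1 hg1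
      have e2 : ∫ ω, (f * μ[h | ℱ k]) ω ∂μ ≤ ∫ ω, f ω * (1 + c * g (k+1) ω) ∂μ := by
        apply integral_mono_ae int1 int2
        filter_upwards [hcond] with ω hω
        exact mul_le_mul_of_nonneg_left hω (hf_nonneg ω)
      have e3 : ∫ ω, f ω * (1 + c * g (k+1) ω) ∂μ ≤ ∫ ω, Z k ω ∂μ := by
        apply integral_mono_ae int2 (hZint k)
        filter_upwards [hg0all] with ω hg
        have hu : 0 ≤ c * g (k+1) ω := mul_nonneg hc0.le (hg (k+1))
        have hkey : Real.exp (-(c * g (k+1) ω)) * (1 + c * g (k+1) ω) ≤ 1 := by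
          have h1 := Real.add_one_le_exp (c * g (k+1) ω)
          rw [Real.exp_neg, inv_mul_le_iff₀ (Real.exp_pos _)]
          linarith
        calc f ω * (1 + c * g (k+1) ω)
            = Z k ω * (Real.exp (-(c * g (k+1) ω)) * (1 + c * g (k+1) ω)) := by
              simp only [hfdef]; ring
        _ ≤ Z k ω * 1 := mul_le_mul_of_nonneg_left hkey (hZpos k ω).le
        _ = Z k ω := mul_one _
      linarith [hfh, e0, e1, e2, e3, ihk]
  -- Markov / Chernoff step
  have hmain : ∫ ω, Z n ω ∂μ ≤ 1 := hZle1 n le_rfl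
  set E := {ω | (Real.sqrt (2 * ν * Real.log (1 / δ)) + κ * Real.log (1 / δ) / 3 ≤
            ∑ j ∈ Finset.Icc 1 n, X j ω) ∧
        (∑ j ∈ Finset.Icc 1 n, (μ[fun ω' => (X j ω') ^ 2 | ℱ (j - 1)]) ω ≤ ν) ∧
        ((Finset.Icc 1 n).sup' (Finset.nonempty_Icc.mpr hn) (fun j => X j ω) ≤ κ)} with hEdef
  have hEsub : E ⊆ {ω | Real.exp L ≤ Z n ω} := by
    intro ω hω
    obtain ⟨h1, h2, h3⟩ := hω
    have hXκ : ∀ j ∈ Finset.Icc 1 n, X j ω ≤ κ := by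
      intro j hj
      exact le_trans (Finset.le_sup' (fun j => X j ω) hj) h3
    have hYeq : ∀ j ∈ Finset.Icc 1 n, Y j ω = X j ω := by
      intro j hj
      exact min_eq_left (hXκ j hj)
    have hsum : ∑ j ∈ Finset.Icc 1 n, (l * Y j ω - c * g j ω)
        = l * (∑ j ∈ Finset.Icc 1 n, X j ω) - c * (∑ j ∈ Finset.Icc 1 n, g j ω) := by
      rw [Finset.sum_sub_distrib, ← Finset.mul_sum, ← Finset.mul_sum]
      congr 1
      congr 1
      exact Finset.sum_congr rfl hYeq
    have hgsum : ∑ j ∈ Finset.Icc 1 n, g j ω ≤ ν := h2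
    have hXsum : t ≤ ∑ j ∈ Finset.Icc 1 n, X j ω := h1
    show Real.exp L ≤ Z n ω
    rw [hZdef]
    simp only
    rw [Real.exp_le_exp, hsum]
    have hlt : l * t ≤ l * ∑ j ∈ Finset.Icc 1 n, X j ω :=
      mul_le_mul_of_nonneg_left hXsum hl0.le
    have hct : c * (∑ j ∈ Finset.Icc 1 n, g j ω) ≤ c * ν :=
      mul_le_mul_of_nonneg_left hgsum hc0.le
    linarith [key]
  have hZn_nonneg : 0 ≤ᵐ[μ] Z n := Filter.Eventually.of_forall (fun ω => (hZpos n ω).le)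
  have hlint : ∫⁻ ω, ENNReal.ofReal (Z n ω) ∂μ = ENNReal.ofReal (∫ ω, Z n ω ∂μ) :=
    (ofReal_integral_eq_lintegral_ofReal (hZint n) hZn_nonneg).symm
  have hmarkov : ENNReal.ofReal (Real.exp L) * μ {ω | Real.exp L ≤ Z n ω}
      ≤ ∫⁻ ω, ENNReal.ofReal (Z n ω) ∂μ := by
    have := mul_meas_ge_le_lintegral₀ (μ := μ)
      (f := fun ω => ENNReal.ofReal (Z n ω))
      ((hZmeas n).ennreal_ofReal.aemeasurable) (ENNReal.ofReal (Real.exp L))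
    have hseteq : {ω | ENNReal.ofReal (Real.exp L) ≤ ENNReal.ofReal (Z n ω)}
        = {ω | Real.exp L ≤ Z n ω} := by
      ext ω
      simp only [Set.mem_setOf_eq]
      rw [ENNReal.ofReal_le_ofReal_iff (hZpos n ω).le]
    rw [hseteq] at this
    exact this
  have hεpos : (0:ℝ) < Real.exp L := Real.exp_pos L
  have hε0 : ENNReal.ofReal (Real.exp L) ≠ 0 := by
    simp [ENNReal.ofReal_eq_zero, not_le, hεpos]
  have hεtop : ENNReal.ofReal (Real.exp L) ≠ ⊤ := ENNReal.ofReal_ne_top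
  have hfinal : μ {ω | Real.exp L ≤ Z n ω} ≤ ENNReal.ofReal δ := by
    have h1 : ENNReal.ofReal (Real.exp L) * μ {ω | Real.exp L ≤ Z n ω} ≤ 1 := by
      calc ENNReal.ofReal (Real.exp L) * μ {ω | Real.exp L ≤ Z n ω}
          ≤ ∫⁻ ω, ENNReal.ofReal (Z n ω) ∂μ := hmarkov
      _ = ENNReal.ofReal (∫ ω, Z n ω ∂μ) := hlint
      _ ≤ ENNReal.ofReal 1 := ENNReal.ofReal_le_ofReal hmain
      _ = 1 := ENNReal.ofReal_one
    have h2 : μ {ω | Real.exp L ≤ Z n ω} ≤ (ENNReal.ofReal (Real.exp L))⁻¹ :=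
      ENNReal.le_inv_iff_mul_le.2 (by rwa [mul_comm] at h1)
    have h3 : (ENNReal.ofReal (Real.exp L))⁻¹ = ENNReal.ofReal δ := by
      rw [← ENNReal.ofReal_inv_of_pos hεpos, ← Real.exp_neg]
      congr 1
      rw [hLdef, one_div, Real.log_inv, neg_neg, Real.exp_log hδ]
    exact h2.trans (le_of_eq h3)
  exact le_trans (measure_mono hEsub) hfinal
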